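/- Let F be a field, T ⊆ F a finite set of size n, and s, d, m positive integers with d < sn. For any function f : T^m → F_{<s}[z_1,...,z_m], there exists at most one polynomial P ∈ F[x_1,...,x_m] of total degree at most d such that the encoding Enc^(s)(P), defined by Enc^(s)(P)(a) = P(a+z) mod ⟨z⟩^s, differs from f on fewer than (1/2)(1 - d/(sn)) fraction of the points of T^m. -/

import Mathlib

open MvPolynomial Classical

/-- The shift `P(z + a)` of a multivariate polynomial. -/
noncomputable def mshift {F : Type*} [CommRing F] {m : ℕ} (a : Fin m → F)
    (P : MvPolynomial (Fin m) F) : MvPolynomial (Fin m) F :=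
  MvPolynomial.bind₁ (fun i => MvPolynomial.X i + MvPolynomial.C (a i)) P

/-- Two polynomials agree modulo the ideal `⟨z⟩^s` generated by monomials of total degree
`s`, i.e. they have the same coefficients in all degrees `< s`. -/
def truncEq {F : Type*} [CommRing F] {m : ℕ} (s : ℕ)
    (R S : MvPolynomial (Fin m) F) : Prop :=
  ∀ e : Fin m →₀ ℕ, (e.sum fun _ k => k) < s → MvPolynomial.coeff e R = MvPolynomial.coeff e S

namespace UDC

variable {F : Type*} [Field F]

/-- minimal total degree of a monomial in the support -/
noncomputable def mindeg {m : ℕ} (S : MvPolynomial (Fin m) F) : ℕ :=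
  sInf {k | ∃ e ∈ S.support, (e.sum fun _ x => x) = k}

lemma mindeg_le {m : ℕ} {S : MvPolynomial (Fin m) F} {e : Fin m →₀ ℕ}
    (he : e ∈ S.support) : mindeg S ≤ e.sum fun _ x => x :=
  Nat.sInf_le ⟨e, he, rfl⟩

lemma exists_mindeg {m : ℕ} {S : MvPolynomial (Fin m) F} (hS : S ≠ 0) :
    ∃ e ∈ S.support, (e.sum fun _ x => x) = mindeg S := by
  have hne : {k | ∃ e ∈ S.support, (e.sum fun _ x => x) = k}.Nonempty := by
    obtain ⟨e, he⟩ := support_nonempty.2 hS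
    exact ⟨_, e, he, rfl⟩
  exact Nat.sInf_mem hne

lemma mshift_mshift {m : ℕ} (a b : Fin m → F) (P : MvPolynomial (Fin m) F) :
    mshift a (mshift b P) = mshift (a + b) P := by
  unfold mshift
  rw [bind₁_bind₁]
  have h : (fun i => (bind₁ fun i => X i + C (a i)) (X i + C (b i)))
      = fun i : Fin m => X i + C ((a + b) i) := by
    funext i
    simp only [map_add, bind₁_X_right, bind₁_C_right, Pi.add_apply]
    ring
  rw [h]

lemma mshift_zero {m : ℕ} (P : MvPolynomial (Fin m) F) : mshift (0 : Fin m → F) P = P := by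
  unfold mshift
  simp

lemma mshift_ne_zero {m : ℕ} (a : Fin m → F) {S : MvPolynomial (Fin m) F} (hS : S ≠ 0) :
    mshift a S ≠ 0 := by
  intro h
  apply hS
  have := congrArg (mshift (-a)) h
  rw [mshift_mshift] at this
  simpa [mshift_zero, mshift] using this


/-- `mshift` as a ring hom. -/
noncomputable def mshiftR {m : ℕ} (a : Fin m → F) :
    MvPolynomial (Fin m) F →+* MvPolynomial (Fin m) F :=
  (MvPolynomial.bind₁ (fun i => MvPolynomial.X i + MvPolynomial.C (a i))).toRingHom

@[simp] lemma mshiftR_apply {m : ℕ} (a : Fin m → F) (S : MvPolynomial (Fin m) F) :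
    mshiftR a S = mshift a S := rfl

lemma finSuccEquiv_mshift {m : ℕ} (a : Fin m → F) (b : F) (P : MvPolynomial (Fin (m+1)) F) :
    finSuccEquiv F m (mshift (Fin.cons b a) P) =
      ((finSuccEquiv F m P).map (mshiftR a)).comp
        (Polynomial.X + Polynomial.C (MvPolynomial.C b)) := by
  induction P using MvPolynomial.induction_on with
  | C r =>
      simp [mshift, bind₁_C_right, finSuccEquiv_apply, Polynomial.C_comp]
  | add p q hp hq =>
      have : mshift (Fin.cons b a) (p + q)
          = mshift (Fin.cons b a) p + mshift (Fin.cons b a) q := map_add _ _ _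
      rw [this, map_add, map_add, Polynomial.map_add, Polynomial.add_comp, hp, hq]
  | mul_X p i hp =>
      have h1 : mshift (Fin.cons b a) (p * X i)
          = mshift (Fin.cons b a) p * mshift (Fin.cons b a) (X i) := map_mul _ _ _
      rw [h1, map_mul, map_mul, Polynomial.map_mul, Polynomial.mul_comp, hp]
      refine congrArg₂ (· * ·) rfl ?_
      have h2 : mshift (Fin.cons b a) (X i)
          = X i + C ((Fin.cons b a : Fin (m+1) → F) i) := bind₁_X_right _ i
      rw [h2]
      induction i using Fin.cases with
      | zero =>
          simp [finSuccEquiv_X_zero, finSuccEquiv_apply, Polynomial.X_comp]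
      | succ k =>
          simp [finSuccEquiv_X_succ, finSuccEquiv_apply, Polynomial.C_comp, mshift]

/-- extract the `i`-coefficient of each coefficient of a polynomial over `MvPolynomial`. -/
noncomputable def coeffPoly {m : ℕ} (i : Fin m →₀ ℕ)
    (q : Polynomial (MvPolynomial (Fin m) F)) : Polynomial F :=
  ⟨AddMonoidAlgebra.ofCoeff (Finsupp.mapRange (MvPolynomial.coeff i) (coeff_zero i) q.toFinsupp.coeff)⟩

lemma coeffPoly_coeff {m : ℕ} (i : Fin m →₀ ℕ) (q : Polynomial (MvPolynomial (Fin m) F))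
    (j : ℕ) : (coeffPoly i q).coeff j = MvPolynomial.coeff i (q.coeff j) := by
  rcases q with ⟨q⟩
  simp [coeffPoly, Polynomial.coeff_ofFinsupp, Finsupp.mapRange_apply, Polynomial.coeff, AddMonoidAlgebra.coeff_ofCoeff]

lemma coeff_coeff_taylor {m : ℕ} (i : Fin m →₀ ℕ) (b : F)
    (q : Polynomial (MvPolynomial (Fin m) F)) (c : ℕ) :
    MvPolynomial.coeff i ((Polynomial.taylor (MvPolynomial.C b) q).coeff c)
      = (Polynomial.taylor b (coeffPoly i q)).coeff c := by
  have hdeg : (coeffPoly i q).natDegree ≤ q.natDegree := by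
    apply Polynomial.natDegree_le_iff_coeff_eq_zero.2
    intro j hj
    rw [coeffPoly_coeff, Polynomial.coeff_eq_zero_of_natDegree_lt hj, coeff_zero]
  rw [Polynomial.taylor_coeff, Polynomial.taylor_coeff]
  rw [Polynomial.eval_eq_sum_range' (n := q.natDegree + 1)
      (lt_of_le_of_lt ((Polynomial.natDegree_hasseDeriv_le q c).trans tsub_le_self)
        (Nat.lt_succ_self _)),
    Polynomial.eval_eq_sum_range' (n := q.natDegree + 1)
      (lt_of_le_of_lt (((Polynomial.natDegree_hasseDeriv_le _ c).trans tsub_le_self).trans hdeg)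
        (Nat.lt_succ_self _))]
  rw [MvPolynomial.coeff_sum]
  apply Finset.sum_congr rfl
  intro n _
  rw [Polynomial.hasseDeriv_coeff, Polynomial.hasseDeriv_coeff, coeffPoly_coeff]
  rw [← map_pow (MvPolynomial.C (R := F) (σ := Fin m)) b n]
  have hc : (((n + c).choose c : ℕ) : MvPolynomial (Fin m) F)
      = C (((n + c).choose c : ℕ) : F) := by simp
  rw [hc, mul_assoc, MvPolynomial.coeff_C_mul, mul_comm (q.coeff (n + c)) (C (b ^ n)),
    MvPolynomial.coeff_C_mul]
  ring


lemma taylor_coeff_rootMultiplicity_ne_zero (b : F) {Q : Polynomial F} (hQ : Q ≠ 0) :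
    (Polynomial.taylor b Q).coeff (Q.rootMultiplicity b) ≠ 0 := by
  have htz : Polynomial.taylor b Q ≠ 0 := by
    intro h
    apply hQ
    have := congrArg (Polynomial.taylor (-b)) h
    rwa [Polynomial.taylor_taylor, neg_add_cancel, Polynomial.taylor_zero, map_zero] at this
  rw [Polynomial.rootMultiplicity_eq_natTrailingDegree, ← Polynomial.taylor_apply]
  exact Polynomial.coeff_natTrailingDegree_ne_zero.2 htz

lemma sum_rootMultiplicity_le {Q : Polynomial F} (hQ : Q ≠ 0) (T : Finset F) :
    ∑ b ∈ T, Q.rootMultiplicity b ≤ Q.natDegree := by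
  classical
  have h1 : ∀ b ∈ T, Q.rootMultiplicity b = Q.roots.count b := fun b _ =>
    (Polynomial.count_roots Q).symm
  rw [Finset.sum_congr rfl h1]
  have h2 : ∑ b ∈ T, Q.roots.count b = ∑ b ∈ T.filter (· ∈ Q.roots.toFinset), Q.roots.count b := by
    apply (Finset.sum_filter_of_ne ?_).symm
    intro b _ hb
    rw [Multiset.mem_toFinset]
    by_contra hmem
    exact hb (Multiset.count_eq_zero.2 hmem)
  rw [h2]
  calc ∑ b ∈ T.filter (· ∈ Q.roots.toFinset), Q.roots.count b
      ≤ ∑ b ∈ Q.roots.toFinset, Q.roots.count b := by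
        apply Finset.sum_le_sum_of_subset
        intro b hb
        exact (Finset.mem_filter.1 hb).2
    _ = Multiset.card Q.roots := Multiset.toFinset_sum_count_eq _
    _ ≤ Q.natDegree := Polynomial.card_roots' Q

lemma sum_piFinset_cons {M : Type*} [AddCommMonoid M] (T : Finset F) (m : ℕ)
    (g : (Fin (m+1) → F) → M) :
    ∑ x ∈ Fintype.piFinset (fun _ : Fin (m+1) => T), g x =
      ∑ b ∈ T, ∑ a ∈ Fintype.piFinset (fun _ : Fin m => T), g (Fin.cons b a) := by
  classical
  rw [← Finset.sum_product']
  apply Finset.sum_bij' (i := fun x _ => ((x 0 : F), (Fin.tail x : Fin m → F)))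
    (j := fun y _ => (Fin.cons y.1 y.2 : Fin (m+1) → F))
  · intro x hx
    rw [Fintype.mem_piFinset] at hx
    refine Finset.mem_product.2 ⟨hx 0, ?_⟩
    rw [Fintype.mem_piFinset]
    intro k
    exact hx k.succ
  · intro y hy
    rw [Finset.mem_product] at hy
    rw [Fintype.mem_piFinset]
    intro k
    induction k using Fin.cases with
    | zero => simpa using hy.1
    | succ k =>
        have := Fintype.mem_piFinset.1 hy.2 k
        simpa using this
  · intro x _
    exact Fin.cons_self_tail x
  · intro y _
    simp [Fin.tail_cons]
  · intro x _
    rw [show Fin.cons (x 0, Fin.tail x).1 (x 0, Fin.tail x).2 = x from Fin.cons_self_tail x]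

lemma main_sz (T : Finset F) :
    ∀ (m : ℕ) (R : MvPolynomial (Fin m) F), R ≠ 0 →
    (∑ a ∈ Fintype.piFinset (fun _ : Fin m => T), mindeg (mshift a R)) * T.card
      ≤ R.totalDegree * T.card ^ m := by
  intro m
  induction m with
  | zero =>
      intro R hR
      have hz : ∀ a ∈ Fintype.piFinset (fun _ : Fin 0 => T), mindeg (mshift a R) = 0 := by
        intro a _
        obtain ⟨e, he, hsum⟩ := exists_mindeg (mshift_ne_zero a hR)
        have : (e.sum fun _ x => x) = 0 := by
          rw [Finsupp.sum]
          have : e.support = ∅ := Finset.eq_empty_of_isEmpty _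
          rw [this, Finset.sum_empty]
        omega
      rw [Finset.sum_congr rfl hz]
      simp
  | succ m ih =>
      intro R hR
      set n := T.card with hn
      set p := finSuccEquiv F m R with hpdef
      have hp0 : p ≠ 0 := by
        intro h
        apply hR
        apply (finSuccEquiv F m).injective
        rw [← hpdef, h, map_zero]
      set t := p.natDegree with ht
      set Pt := p.coeff t with hPtdef
      have hPt : Pt ≠ 0 := by
        rw [hPtdef, ht]
        exact Polynomial.leadingCoeff_ne_zero.2 hp0
      have key : ∀ a ∈ Fintype.piFinset (fun _ : Fin m => T),
          ∑ b ∈ T, mindeg (mshift (Fin.cons b a) R)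
            ≤ n * mindeg (mshift a Pt) + t := by
        intro a _
        obtain ⟨ia, hia_mem, hia_sum⟩ := exists_mindeg (mshift_ne_zero a hPt)
        set q := p.map (mshiftR a) with hq
        set Qa := coeffPoly ia q with hQadef
        have hqt : ∀ j, q.coeff j = mshift a (p.coeff j) := by
          intro j; rw [hq, Polynomial.coeff_map, mshiftR_apply]
        have hQa_t : Qa.coeff t ≠ 0 := by
          rw [hQadef, coeffPoly_coeff, hqt]
          exact mem_support_iff.1 hia_mem
        have hQa0 : Qa ≠ 0 := fun h => hQa_t (by simp [h])
        have hQa_deg : Qa.natDegree ≤ t := by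
          apply Polynomial.natDegree_le_iff_coeff_eq_zero.2
          intro j hj
          rw [hQadef, coeffPoly_coeff, hqt, Polynomial.coeff_eq_zero_of_natDegree_lt hj]
          simp [mshift]
        have hb : ∀ b ∈ T, mindeg (mshift (Fin.cons b a) R)
            ≤ Qa.rootMultiplicity b + mindeg (mshift a Pt) := by
          intro b _
          set c := Qa.rootMultiplicity b with hcdef
          have hcoeff : MvPolynomial.coeff (Finsupp.cons c ia) (mshift (Fin.cons b a) R) ≠ 0 := by
            rw [← finSuccEquiv_coeff_coeff, finSuccEquiv_mshift,
              show (Polynomial.X + Polynomial.C (MvPolynomial.C b) :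
                  Polynomial (MvPolynomial (Fin m) F))
                = Polynomial.X + Polynomial.C (MvPolynomial.C b) from rfl]
            rw [← Polynomial.taylor_apply, coeff_coeff_taylor]
            exact taylor_coeff_rootMultiplicity_ne_zero b hQa0
          have hle := mindeg_le (mem_support_iff.2 hcoeff)
          rw [Finsupp.sum_cons] at hle
          omega
        calc ∑ b ∈ T, mindeg (mshift (Fin.cons b a) R)
            ≤ ∑ b ∈ T, (Qa.rootMultiplicity b + mindeg (mshift a Pt)) :=
              Finset.sum_le_sum hb
          _ = (∑ b ∈ T, Qa.rootMultiplicity b) + n * mindeg (mshift a Pt) := by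
              rw [Finset.sum_add_distrib, Finset.sum_const, smul_eq_mul, hn]
          _ ≤ t + n * mindeg (mshift a Pt) :=
              add_le_add ((sum_rootMultiplicity_le hQa0 T).trans hQa_deg) le_rfl
          _ = n * mindeg (mshift a Pt) + t := by ring
      have hDt : Pt.totalDegree + t ≤ R.totalDegree := by
        rw [hPtdef]
        exact totalDegree_coeff_finSuccEquiv_add_le R t hPt
      have ihPt := ih Pt hPt
      calc (∑ x ∈ Fintype.piFinset (fun _ : Fin (m+1) => T), mindeg (mshift x R)) * n
          = (∑ b ∈ T, ∑ a ∈ Fintype.piFinset (fun _ : Fin m => T),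
              mindeg (mshift (Fin.cons b a) R)) * n := by
            rw [sum_piFinset_cons]
        _ = (∑ a ∈ Fintype.piFinset (fun _ : Fin m => T), ∑ b ∈ T,
              mindeg (mshift (Fin.cons b a) R)) * n := by rw [Finset.sum_comm]
        _ ≤ (∑ a ∈ Fintype.piFinset (fun _ : Fin m => T),
              (n * mindeg (mshift a Pt) + t)) * n := by
            exact Nat.mul_le_mul_right _ (Finset.sum_le_sum key)
        _ = (n * ∑ a ∈ Fintype.piFinset (fun _ : Fin m => T), mindeg (mshift a Pt)
              + t * n ^ m) * n := by
            rw [Finset.sum_add_distrib, Finset.sum_const, Finset.mul_sum]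
            simp [Fintype.card_piFinset_const, mul_comm, ← hn]
        _ = n * ((∑ a ∈ Fintype.piFinset (fun _ : Fin m => T), mindeg (mshift a Pt)) * n)
              + t * n ^ (m+1) := by ring
        _ ≤ n * (Pt.totalDegree * n ^ m) + t * n ^ (m+1) := by
            exact Nat.add_le_add_right (Nat.mul_le_mul_left _ ihPt) _
        _ = (Pt.totalDegree + t) * n ^ (m+1) := by ring
        _ ≤ R.totalDegree * n ^ (m+1) := Nat.mul_le_mul_right _ hDt

end UDC

/-- Combinatorial multiplicity Schwartz–Zippel: for a received word
`f : T^m → F_{<s}[z]` there is at most one polynomial of total degree at most `d` whose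
order-`s` multiplicity encoding differs from `f` on fewer than a
`(1/2)(1 - d/(s n))` fraction of the points of `T^m`. -/
theorem unique_decoding_combinatorial {F : Type*} [Field F] {m s d : ℕ}
    (hm : 0 < m) (hs : 0 < s) (hd : 0 < d) (T : Finset F) (hdsn : d < s * T.card)
    (f : (Fin m → F) → MvPolynomial (Fin m) F)
    (P Q : MvPolynomial (Fin m) F)
    (hPdeg : P.totalDegree ≤ d) (hQdeg : Q.totalDegree ≤ d)
    (hPf : (((Fintype.piFinset (fun _ : Fin m => T)).filter
        (fun a => ¬ truncEq s (mshift a P) (f a))).card : ℚ) <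
      (1/2) * (1 - (d : ℚ) / ((s : ℚ) * T.card)) * (T.card : ℚ) ^ m)
    (hQf : (((Fintype.piFinset (fun _ : Fin m => T)).filter
        (fun a => ¬ truncEq s (mshift a Q) (f a))).card : ℚ) <
      (1/2) * (1 - (d : ℚ) / ((s : ℚ) * T.card)) * (T.card : ℚ) ^ m) :
    P = Q := by
  classical
  by_contra hPQ
  set R := P - Q with hRdef
  have hR : R ≠ 0 := sub_ne_zero.2 hPQ
  set n := T.card with hn
  have hn0 : 0 < n := by
    rcases Nat.eq_zero_or_pos n with h | h
    · rw [h, Nat.mul_zero] at hdsn; omega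
    · exact h
  have hRdeg : R.totalDegree ≤ d := by
    calc R.totalDegree = (P + (-Q)).totalDegree := by rw [hRdef]; ring_nf
      _ ≤ max P.totalDegree (-Q).totalDegree := MvPolynomial.totalDegree_add _ _
      _ ≤ d := by rw [MvPolynomial.totalDegree_neg]; exact max_le hPdeg hQdeg
  set piF := Fintype.piFinset (fun _ : Fin m => T) with hpiF
  set badP := piF.filter (fun a => ¬ truncEq s (mshift a P) (f a)) with hbadP
  set badQ := piF.filter (fun a => ¬ truncEq s (mshift a Q) (f a)) with hbadQ
  set G := piF.filter
    (fun a => truncEq s (mshift a P) (f a) ∧ truncEq s (mshift a Q) (f a)) with hG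
  -- counting in ℕ
  have hNcard : piF.card = n ^ m := Fintype.card_piFinset_const T m
  have hsplit : G.card + (piF.filter (fun a =>
      ¬ (truncEq s (mshift a P) (f a) ∧ truncEq s (mshift a Q) (f a)))).card = piF.card :=
    Finset.card_filter_add_card_filter_not _
  have hsub : piF.filter (fun a =>
      ¬ (truncEq s (mshift a P) (f a) ∧ truncEq s (mshift a Q) (f a))) ⊆ badP ∪ badQ := by
    intro a ha
    rw [Finset.mem_filter] at ha
    rw [Finset.mem_union, hbadP, hbadQ, Finset.mem_filter, Finset.mem_filter]
    rcases not_and_or.1 ha.2 with h | h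
    · exact Or.inl ⟨ha.1, h⟩
    · exact Or.inr ⟨ha.1, h⟩
  have hcount : n ^ m ≤ G.card + (badP.card + badQ.card) := by
    calc n ^ m = piF.card := hNcard.symm
      _ = G.card + (piF.filter _).card := hsplit.symm
      _ ≤ G.card + (badP ∪ badQ).card := by
          exact Nat.add_le_add_left (Finset.card_le_card hsub) _
      _ ≤ G.card + (badP.card + badQ.card) := by
          exact Nat.add_le_add_left (Finset.card_union_le _ _) _
  -- multiplicity bound
  have hmult : ∀ a ∈ G, s ≤ UDC.mindeg (mshift a R) := by
    intro a ha
    rw [hG, Finset.mem_filter] at ha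
    obtain ⟨e, he, hesum⟩ := UDC.exists_mindeg (UDC.mshift_ne_zero a hR)
    by_contra hlt
    push_neg at hlt
    apply mem_support_iff.1 he
    have hshift : mshift a R = mshift a P - mshift a Q := map_sub _ _ _
    rw [hshift, MvPolynomial.coeff_sub]
    have h1 := ha.2.1 e (by omega)
    have h2 := ha.2.2 e (by omega)
    rw [h1, h2, sub_self]
  have hGsum : s * G.card ≤ ∑ a ∈ piF, UDC.mindeg (mshift a R) := by
    calc s * G.card = ∑ _a ∈ G, s := by rw [Finset.sum_const, smul_eq_mul, mul_comm]
      _ ≤ ∑ a ∈ G, UDC.mindeg (mshift a R) := Finset.sum_le_sum hmult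
      _ ≤ ∑ a ∈ piF, UDC.mindeg (mshift a R) := by
          apply Finset.sum_le_sum_of_subset
          rw [hG]; exact Finset.filter_subset _ _
  have hmain := UDC.main_sz T m R hR
  have hfinal : s * G.card * n ≤ d * n ^ m := by
    calc s * G.card * n ≤ (∑ a ∈ piF, UDC.mindeg (mshift a R)) * n :=
          Nat.mul_le_mul_right _ hGsum
      _ ≤ R.totalDegree * n ^ m := hmain
      _ ≤ d * n ^ m := Nat.mul_le_mul_right _ hRdeg
  -- rational arithmetic
  have hcast : ((s : ℚ) * G.card * n) ≤ (d : ℚ) * (n : ℚ) ^ m := by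
    exact_mod_cast hfinal
  have hcount' : ((n : ℚ)) ^ m ≤ (G.card : ℚ) + ((badP.card : ℚ) + (badQ.card : ℚ)) := by
    exact_mod_cast hcount
  have hbads : ((badP.card : ℚ) + (badQ.card : ℚ))
      < (1 - (d : ℚ) / ((s : ℚ) * n)) * (n : ℚ) ^ m := by
    have := add_lt_add hPf hQf
    calc ((badP.card : ℚ) + (badQ.card : ℚ))
        < (1/2) * (1 - (d : ℚ) / ((s : ℚ) * n)) * (n : ℚ) ^ m
          + (1/2) * (1 - (d : ℚ) / ((s : ℚ) * n)) * (n : ℚ) ^ m := this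
      _ = (1 - (d : ℚ) / ((s : ℚ) * n)) * (n : ℚ) ^ m := by ring
  have hsn : (0 : ℚ) < (s : ℚ) * n := by
    have : (0 : ℕ) < s * n := Nat.mul_pos hs hn0
    exact_mod_cast this
  have hGlb : ((d : ℚ) / ((s : ℚ) * n)) * (n : ℚ) ^ m < (G.card : ℚ) := by
    nlinarith [hcount', hbads]
  have := mul_lt_mul_of_pos_right hGlb hsn
  rw [div_mul_eq_mul_div, div_mul_eq_mul_div, mul_comm ((d : ℚ) * (n : ℚ) ^ m) ((s:ℚ)*n),
    mul_div_assoc] at this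
  rw [mul_comm ((s:ℚ)*n) ((d : ℚ) * (n : ℚ) ^ m / ((s:ℚ)*n)),
    div_mul_cancel₀ _ (ne_of_gt hsn)] at this
  nlinarith [hcast, this]
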